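/- Let δ ∈ (0,1), θ > 0, and p ∈ [0,1]. Then 2∫_0^1 [1 − (1 − pθ r^{2/δ}/(1+θ r^{2/δ}))²]·r^{−3} dr = 2p·A(θ) − p²·B(θ), where A(θ) = θδ·∫_0^1 s^{−δ}/(1+θs) ds and B(θ) = θ²δ·∫_0^1 s^{1−δ}/(1+θs)² ds. (Hence the second moment of the conditional success probability of a Poisson cellular network with base-station activity probability p satisfies M₂(p)^{−1} = 1 + 2p·A(θ) − p²·B(θ).) -/

import Mathlib

open Real MeasureTheory

/-- For `δ ∈ (0,1)`, `θ > 0`, `p ∈ [0,1]`: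
`2∫_0^1 (1 - (1 - pθr^{2/δ}/(1+θr^{2/δ}))²) r^{-3} dr = 2p A(θ) - p² B(θ)`, where
`A(θ) = θδ ∫_0^1 s^{-δ}/(1+θs) ds` and `B(θ) = θ²δ ∫_0^1 s^{1-δ}/(1+θs)² ds`
(so `M₂(p)⁻¹ = 1 + 2p A(θ) - p² B(θ)`). -/
theorem cellular_second_moment_identity (δ θ p : ℝ) (hδ : δ ∈ Set.Ioo (0:ℝ) 1)
    (hθ : 0 < θ) (hp : p ∈ Set.Icc (0:ℝ) 1)
    (A B : ℝ → ℝ)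
    (hA : ∀ ϑ : ℝ, A ϑ = ϑ * δ * ∫ s in Set.Ioo (0:ℝ) 1, s ^ (-δ) / (1 + ϑ * s))
    (hB : ∀ ϑ : ℝ, B ϑ = ϑ ^ 2 * δ * ∫ s in Set.Ioo (0:ℝ) 1, s ^ (1 - δ) / (1 + ϑ * s) ^ 2) :
    2 * ∫ r in Set.Ioo (0:ℝ) 1,
        (1 - (1 - p * θ * r ^ (2 / δ) / (1 + θ * r ^ (2 / δ))) ^ 2) * r ^ (-3 : ℝ) =
      2 * p * A θ - p ^ 2 * B θ := by
  obtain ⟨hδ0, hδ1⟩ := hδ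
  set c : ℝ := 2 / δ with hc
  have hδne : δ ≠ 0 := ne_of_gt hδ0
  have hcpos : 0 < c := by positivity
  have hcne : c ≠ 0 := ne_of_gt hcpos
  have hcδ : c * δ = 2 := by rw [hc]; field_simp
  -- the function after substitution
  set g : ℝ → ℝ := fun s =>
    (δ / 2) * (2 * p * θ * (s ^ (-δ) / (1 + θ * s)) -
      p ^ 2 * θ ^ 2 * (s ^ (1 - δ) / (1 + θ * s) ^ 2)) with hg
  -- image of Ioo 0 1 under r ↦ r^c
  have himg : (fun r : ℝ => r ^ c) '' Set.Ioo 0 1 = Set.Ioo (0:ℝ) 1 := by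
    ext s
    constructor
    · rintro ⟨r, ⟨hr0, hr1⟩, rfl⟩
      exact ⟨Real.rpow_pos_of_pos hr0 c, Real.rpow_lt_one hr0.le hr1 hcpos⟩
    · rintro ⟨hs0, hs1⟩
      refine ⟨s ^ (1 / c), ⟨Real.rpow_pos_of_pos hs0 _,
        Real.rpow_lt_one hs0.le hs1 (by positivity)⟩, ?_⟩
      show (s ^ (1 / c)) ^ c = s
      rw [← Real.rpow_mul hs0.le, one_div, inv_mul_cancel₀ hcne, Real.rpow_one]
  have hinj : Set.InjOn (fun r : ℝ => r ^ c) (Set.Ioo 0 1) := by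
    have hmono : StrictMonoOn (fun r : ℝ => r ^ c) (Set.Ioo 0 1) :=
      fun a ha b _ hab => Real.rpow_lt_rpow ha.1.le hab hcpos
    exact hmono.injOn
  have hderiv : ∀ r ∈ Set.Ioo (0:ℝ) 1,
      HasDerivWithinAt (fun r : ℝ => r ^ c) (c * r ^ (c - 1)) (Set.Ioo 0 1) r := by
    intro r hr
    simpa [mul_comm] using
      (Real.hasDerivAt_rpow_const (p := c) (Or.inl (ne_of_gt hr.1))).hasDerivWithinAt
  -- change of variables
  have hchg : ∫ s in Set.Ioo (0:ℝ) 1, g s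
      = ∫ r in Set.Ioo (0:ℝ) 1, |c * r ^ (c - 1)| • g (r ^ c) := by
    conv_lhs => rw [← himg]
    exact integral_image_eq_integral_abs_deriv_smul measurableSet_Ioo hderiv hinj g
  -- pointwise identification with the original integrand
  have hpt : ∀ r ∈ Set.Ioo (0:ℝ) 1,
      (1 - (1 - p * θ * r ^ c / (1 + θ * r ^ c)) ^ 2) * r ^ (-3 : ℝ)
        = |c * r ^ (c - 1)| • g (r ^ c) := by
    intro r hr
    obtain ⟨hr0, hr1⟩ := hr
    have hrc : 0 < r ^ c := Real.rpow_pos_of_pos hr0 c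
    have habs : |c * r ^ (c - 1)| = c * r ^ (c - 1) :=
      abs_of_pos (mul_pos hcpos (Real.rpow_pos_of_pos hr0 _))
    have h5 : r ^ (c - 1) * (r ^ c) ^ (-δ) = r ^ c * r ^ (-3 : ℝ) := by
      rw [← Real.rpow_mul hr0.le, ← Real.rpow_add hr0, ← Real.rpow_add hr0]
      congr 1
      linear_combination -hcδ
    have h6 : r ^ (c - 1) * (r ^ c) ^ (1 - δ) = r ^ c * r ^ c * r ^ (-3 : ℝ) := by
      rw [← Real.rpow_mul hr0.le, ← Real.rpow_add hr0, ← Real.rpow_add hr0,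
        ← Real.rpow_add hr0]
      congr 1
      linear_combination -hcδ
    have hden : (0:ℝ) < 1 + θ * r ^ c := by positivity
    rw [smul_eq_mul, habs, hg]
    have hexp : c * r ^ (c - 1) *
        ((δ / 2) * (2 * p * θ * ((r ^ c) ^ (-δ) / (1 + θ * r ^ c)) -
          p ^ 2 * θ ^ 2 * ((r ^ c) ^ (1 - δ) / (1 + θ * r ^ c) ^ 2)))
        = (c * (δ / 2)) * (2 * p * θ * ((r ^ (c - 1) * (r ^ c) ^ (-δ)) / (1 + θ * r ^ c)) -
          p ^ 2 * θ ^ 2 * ((r ^ (c - 1) * (r ^ c) ^ (1 - δ)) / (1 + θ * r ^ c) ^ 2)) := by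
      ring
    rw [hexp, h5, h6]
    have hc2 : c * (δ / 2) = 1 := by
      field_simp [hc]
      linarith [hcδ]
    rw [hc2]
    field_simp
    ring
  -- integrability of the two pieces
  have Irpow : IntegrableOn (fun s : ℝ => s ^ (-δ)) (Set.Ioo 0 1) volume := by
    have h := intervalIntegral.intervalIntegrable_rpow' (a := 0) (b := 1)
      (r := -δ) (by linarith)
    rw [intervalIntegrable_iff_integrableOn_Ioc_of_le (by norm_num)] at h
    exact h.mono_set Set.Ioo_subset_Ioc_self
  have Iu : IntegrableOn (fun s : ℝ => s ^ (-δ) / (1 + θ * s)) (Set.Ioo 0 1) volume := by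
    refine Integrable.mono' Irpow ?_ ?_
    · apply Measurable.aestronglyMeasurable
      fun_prop
    · filter_upwards [ae_restrict_mem measurableSet_Ioo] with s hs
      obtain ⟨hs0, hs1⟩ := hs
      have h1 : (0:ℝ) ≤ s ^ (-δ) := (Real.rpow_pos_of_pos hs0 _).le
      have h2 : (1:ℝ) ≤ 1 + θ * s := by nlinarith
      rw [Real.norm_eq_abs, abs_of_nonneg (div_nonneg h1 (by linarith))]
      exact div_le_self h1 h2
  have Iv : IntegrableOn (fun s : ℝ => s ^ (1 - δ) / (1 + θ * s) ^ 2)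
      (Set.Ioo 0 1) volume := by
    refine Integrable.mono' (g := fun _ : ℝ => (1:ℝ))
      ((integrableOn_const_iff).mpr (Or.inr (by simp [Real.volume_Ioo]))) ?_ ?_
    · apply Measurable.aestronglyMeasurable
      fun_prop
    · filter_upwards [ae_restrict_mem measurableSet_Ioo] with s hs
      obtain ⟨hs0, hs1⟩ := hs
      have h1 : s ^ (1 - δ) ≤ 1 := Real.rpow_le_one hs0.le hs1.le (by linarith)
      have h2 : (1:ℝ) ≤ (1 + θ * s) ^ 2 := by nlinarith [mul_pos hθ hs0, sq_nonneg (θ * s)]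
      have h0 : (0:ℝ) ≤ s ^ (1 - δ) := (Real.rpow_pos_of_pos hs0 _).le
      rw [Real.norm_eq_abs, abs_of_nonneg (div_nonneg h0 (by positivity))]
      exact div_le_one_of_le₀ (le_trans h1 h2) (by positivity)
  -- put everything together
  have hmain : ∫ r in Set.Ioo (0:ℝ) 1,
      (1 - (1 - p * θ * r ^ c / (1 + θ * r ^ c)) ^ 2) * r ^ (-3 : ℝ)
      = ∫ s in Set.Ioo (0:ℝ) 1, g s := by
    rw [hchg]
    exact setIntegral_congr_fun measurableSet_Ioo hpt
  rw [hmain, hA, hB, hg]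
  have hsplit : ∫ s in Set.Ioo (0:ℝ) 1,
      (δ / 2) * (2 * p * θ * (s ^ (-δ) / (1 + θ * s)) -
        p ^ 2 * θ ^ 2 * (s ^ (1 - δ) / (1 + θ * s) ^ 2))
      = (δ / 2) * (2 * p * θ * ∫ s in Set.Ioo (0:ℝ) 1, s ^ (-δ) / (1 + θ * s))
        - (δ / 2) * (p ^ 2 * θ ^ 2 * ∫ s in Set.Ioo (0:ℝ) 1, s ^ (1 - δ) / (1 + θ * s) ^ 2) := by
    rw [integral_const_mul, integral_sub (Iu.const_mul _) (Iv.const_mul _),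
      integral_const_mul, integral_const_mul]
    ring
  rw [hsplit]
  ring
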